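/- Let ρ > 0, x ∈ ℝⁿ_↓, and let k = μ(ρ, x) be the number of indices i ∈ {1,…,n} with 2 − ρx₁xᵢ < 0. (i) If k = 0, then e₁ is a global minimizer of ½wᵀA_{ρ,x}w over S^{n-1}_+. (ii) If 1 ≤ k ≤ n, then min{½wᵀA_{ρ,x}w : w ∈ S^{n-1}_+} = min{½w̃ᵀA_{ρ,x_{[k]}}w̃ : w̃ ∈ S^{k-1}_+}, where x_{[k]} = (x₁,…,x_k) and A_{ρ,x_{[k]}} is the k×k leading principal submatrix of A_{ρ,x}; moreover, if w̃* is a global minimizer of the latter problem, then the vector obtained from w̃* by appending n − k zeros is a global minimizer of the former problem. -/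

import Mathlib

/-- The quadratic form `w ↦ ½ wᵀ A_{ρ,y} w` where `A_{ρ,y} = 2eeᵀ − ρyyᵀ`,
i.e. `(A_{ρ,y})_{ij} = 2 − ρ yᵢ yⱼ`. -/
noncomputable def qform {m : ℕ} (ρ : ℝ) (y w : Fin m → ℝ) : ℝ :=
  (1 / 2) * ∑ i, ∑ j, (2 - ρ * y i * y j) * w i * w j

/-- `S^{m-1}_+`: the intersection of the unit sphere of `ℝᵐ` with the nonnegative
orthant. -/
def SPlus (m : ℕ) : Set (Fin m → ℝ) :=
  {w | (∑ i, (w i) ^ 2 = 1) ∧ ∀ i, 0 ≤ w i}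

lemma qform_eq {m : ℕ} (ρ : ℝ) (y w : Fin m → ℝ) :
    qform ρ y w = (∑ i, w i)^2 - ρ/2 * (∑ i, y i * w i)^2 := by
  unfold qform
  rw [sq, sq, Finset.sum_mul_sum, Finset.sum_mul_sum, Finset.mul_sum, Finset.mul_sum,
    ← Finset.sum_sub_distrib]
  refine Finset.sum_congr rfl fun i _ => ?_
  rw [Finset.mul_sum, Finset.mul_sum, ← Finset.sum_sub_distrib]
  refine Finset.sum_congr rfl fun j _ => ?_
  ring

lemma sum_pad {n k : ℕ} (hkn : k ≤ n) (G : Fin k → ℝ) :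
    ∑ i : Fin n, (if h : (i:ℕ) < k then G ⟨i,h⟩ else 0) = ∑ j : Fin k, G j := by
  have h1 := Fin.sum_univ_eq_sum_range (fun j => if h : j < k then G ⟨j,h⟩ else 0) n
  have h2 := Fin.sum_univ_eq_sum_range (fun j => if h : j < k then G ⟨j,h⟩ else 0) k
  rw [h1]
  have h3 : ∑ j : Fin k, G j = ∑ j : Fin k, (fun j => if h : j < k then G ⟨j,h⟩ else 0) (j : ℕ) :=
    Finset.sum_congr rfl fun j _ => by simp [j.isLt]
  rw [h3, h2]
  symm
  apply Finset.sum_subset (Finset.range_subset_range.mpr hkn)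
  intro j _ hj
  rw [Finset.mem_range] at hj
  simp [hj]

lemma sum_split {n k : ℕ} (hn : 0 < n) (hk1 : 0 < k) (hkn : k ≤ n) (f : Fin n → ℝ) :
    ∑ i, f i = f ⟨0,hn⟩
      + ∑ i ∈ ((Finset.univ.filter fun i : Fin n => (i:ℕ) < k).erase ⟨0,hn⟩), f i
      + ∑ i ∈ (Finset.univ.filter fun i : Fin n => ¬ (i:ℕ) < k), f i := by
  rw [← Finset.sum_filter_add_sum_filter_not Finset.univ (fun i : Fin n => (i:ℕ) < k) f]
  congr 1
  rw [← Finset.add_sum_erase _ f (show (⟨0,hn⟩:Fin n) ∈ _ by simp [hk1])]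

lemma e1_mem {m : ℕ} (hm : 0 < m) :
    (fun i : Fin m => if i = ⟨0,hm⟩ then (1:ℝ) else 0) ∈ SPlus m := by
  constructor
  · have h : ∀ i : Fin m, ((if i = ⟨0,hm⟩ then (1:ℝ) else 0))^2 = if i = ⟨0,hm⟩ then 1 else 0 := by
      intro i; split <;> norm_num
    simp only [h]
    rw [Finset.sum_ite_eq' Finset.univ (⟨0,hm⟩ : Fin m) (fun _ => (1:ℝ))]
    simp
  · intro i; dsimp only; split <;> norm_num

lemma qform_e1 {m : ℕ} (hm : 0 < m) (ρ : ℝ) (x : Fin m → ℝ) :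
    qform ρ x (fun i : Fin m => if i = ⟨0,hm⟩ then (1:ℝ) else 0)
      = 1 - ρ/2 * (x ⟨0,hm⟩)^2 := by
  rw [qform_eq]
  have h1 : ∑ i : Fin m, (if i = ⟨0,hm⟩ then (1:ℝ) else 0) = 1 := by
    rw [Finset.sum_ite_eq' Finset.univ (⟨0,hm⟩ : Fin m) (fun _ => (1:ℝ))]; simp
  have h2 : ∑ i : Fin m, x i * (if i = ⟨0,hm⟩ then (1:ℝ) else 0) = x ⟨0,hm⟩ := by
    have : ∀ i : Fin m, x i * (if i = ⟨0,hm⟩ then (1:ℝ) else 0)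
        = if i = ⟨0,hm⟩ then x i else 0 := by intro i; split <;> simp
    simp only [this]
    rw [Finset.sum_ite_eq' Finset.univ (⟨0,hm⟩ : Fin m) x]; simp
  rw [h1, h2]; norm_num

lemma sum_le_card {m : ℕ} (w : Fin m → ℝ) (hw : w ∈ SPlus m) : ∑ i, w i ≤ m := by
  have h1 : ∀ i, w i ≤ 1 := by
    intro i
    have h2 : (w i)^2 ≤ 1 := hw.1 ▸ Finset.single_le_sum
      (fun j _ => sq_nonneg (w j)) (Finset.mem_univ i)
    nlinarith [hw.2 i]
  calc ∑ i, w i ≤ ∑ _i : Fin m, (1:ℝ) := Finset.sum_le_sum fun i _ => h1 i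
    _ = m := by simp

lemma q_lower {m : ℕ} {ρ : ℝ} (hρ : 0 < ρ) (x : Fin m → ℝ) (hx : ∀ i, 0 ≤ x i)
    (c : ℝ) (hc0 : 0 ≤ c) (hc : ∀ i, x i ≤ c) (w : Fin m → ℝ) (hw : w ∈ SPlus m) :
    -(ρ/2) * c^2 * m^2 ≤ qform ρ x w := by
  rw [qform_eq]
  have hs0 : 0 ≤ ∑ i, w i := Finset.sum_nonneg fun i _ => hw.2 i
  have hsm : ∑ i, w i ≤ m := sum_le_card w hw
  have ht0 : 0 ≤ ∑ i, x i * w i := Finset.sum_nonneg fun i _ => mul_nonneg (hx i) (hw.2 i)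
  have htc : ∑ i, x i * w i ≤ c * ∑ i, w i := by
    rw [Finset.mul_sum]
    exact Finset.sum_le_sum fun i _ => mul_le_mul_of_nonneg_right (hc i) (hw.2 i)
  have htm : ∑ i, x i * w i ≤ c * m := le_trans htc (mul_le_mul_of_nonneg_left hsm hc0)
  nlinarith [sq_nonneg (∑ i, w i), pow_le_pow_left₀ ht0 htm 2]

lemma key_ineq (ρ x0 w0 r H Hx S2 t2 : ℝ)
    (hρ : 0 < ρ) (hx0 : 0 < x0) (hw0 : 0 ≤ w0) (hH : 0 ≤ H) (hHx : 0 ≤ Hx)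
    (hS2 : 0 ≤ S2) (ht2 : 0 ≤ t2) (hr1 : w0 ≤ r) (hr2 : r ≤ w0 + S2)
    (hHxH : Hx ≤ x0 * H) (ht2S2 : ρ * x0 * t2 ≤ 2 * S2) (hx02 : 2 < ρ * x0 * x0) :
    (r+H)^2 - ρ/2*(x0*r+Hx)^2 ≤ (w0+H+S2)^2 - ρ/2*(x0*w0+Hx+t2)^2 := by
  set s' := r + H with hs'def
  set t' := x0*r + Hx with ht'def
  set s := w0+H+S2 with hsdef
  set t := x0*w0+Hx+t2 with htdef
  have hr0 : 0 ≤ r := le_trans hw0 hr1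
  have hs'0 : 0 ≤ s' := by rw [hs'def]; linarith
  have hss : s' ≤ s := by rw [hs'def, hsdef]; linarith
  have ht'0 : 0 ≤ t' := by rw [ht'def]; nlinarith
  rcases le_or_gt t t' with hc | hc
  · have h0t : 0 ≤ t := by rw [htdef]; nlinarith
    have h1 : t^2 ≤ t'^2 := pow_le_pow_left₀ h0t hc 2
    have h2 : s'^2 ≤ s^2 := pow_le_pow_left₀ hs'0 hss 2
    nlinarith [mul_le_mul_of_nonneg_left h1 (le_of_lt (half_pos hρ))]
  · have ht2x : t2 ≤ x0 * S2 := by nlinarith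
    have h1 : t + t' ≤ x0*(s + s') := by rw [htdef, ht'def, hsdef, hs'def]; nlinarith
    have h2 : ρ/2*x0*(t - t') ≤ s - s' := by
      have hδ0 : 0 ≤ r - w0 := by linarith
      have : t - t' = t2 - x0*(r - w0) := by rw [htdef, ht'def]; ring
      rw [this, hsdef, hs'def]
      nlinarith [mul_nonneg (le_of_lt (sub_pos.mpr hx02)) hδ0]
    have h3 : ρ/2*(t-t')*(t+t') ≤ ρ/2*(t-t')*(x0*(s+s')) :=
      mul_le_mul_of_nonneg_left h1 (by nlinarith)
    have h4 : (ρ/2*x0*(t - t'))*(s+s') ≤ (s-s')*(s+s') :=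
      mul_le_mul_of_nonneg_right h2 (by linarith)
    have e1 : ρ/2*(t-t')*(t+t') = ρ/2*t^2 - ρ/2*t'^2 := by ring
    have e2 : (s-s')*(s+s') = s^2 - s'^2 := by ring
    have e3 : ρ/2*(t-t')*(x0*(s+s')) = (ρ/2*x0*(t - t'))*(s+s') := by ring
    linarith

lemma pad_spec {n k : ℕ} (hkn : k ≤ n) (ρ : ℝ) (x : Fin n → ℝ) (wt : Fin k → ℝ)
    (hwt : wt ∈ SPlus k) :
    (fun i : Fin n => if h : (i:ℕ) < k then wt ⟨i,h⟩ else 0) ∈ SPlus n ∧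
    qform ρ x (fun i : Fin n => if h : (i:ℕ) < k then wt ⟨i,h⟩ else 0)
      = qform ρ (fun j : Fin k => x (Fin.castLE hkn j)) wt := by
  obtain ⟨hnorm, hpos⟩ := hwt
  have hsq : ∑ i : Fin n, (if h : (i:ℕ) < k then wt ⟨i,h⟩ else 0)^2 = ∑ j, (wt j)^2 := by
    rw [← sum_pad hkn (fun j => (wt j)^2)]
    refine Finset.sum_congr rfl fun i _ => ?_
    by_cases h : (i:ℕ) < k <;> simp [h]
  have hsum : ∑ i : Fin n, (if h : (i:ℕ) < k then wt ⟨i,h⟩ else 0) = ∑ j, wt j :=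
    sum_pad hkn wt
  have hxsum : ∑ i : Fin n, x i * (if h : (i:ℕ) < k then wt ⟨i,h⟩ else 0)
      = ∑ j, x (Fin.castLE hkn j) * wt j := by
    rw [← sum_pad hkn (fun j => x (Fin.castLE hkn j) * wt j)]
    refine Finset.sum_congr rfl fun i _ => ?_
    by_cases h : (i:ℕ) < k
    · simp only [dif_pos h]
      rfl
    · simp [h]
  refine ⟨⟨by rw [← hnorm]; exact hsq, fun i => ?_⟩, ?_⟩
  · dsimp only; by_cases h : (i:ℕ) < k
    · simp only [dif_pos h]; exact hpos _
    · simp [h]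
  · rw [qform_eq, qform_eq, hsum, hxsum]

set_option maxHeartbeats 1000000 in
lemma reduce {n k : ℕ} (hn : 0 < n) (hkn : k ≤ n) (hk1 : 0 < k)
    {ρ : ℝ} (hρ : 0 < ρ) {x : Fin n → ℝ}
    (hnonneg : ∀ i, 0 ≤ x i)
    (hxle : ∀ i : Fin n, x i ≤ x ⟨0,hn⟩)
    (hx02 : 2 < ρ * x ⟨0,hn⟩ * x ⟨0,hn⟩)
    (hgood : ∀ i : Fin n, k ≤ (i:ℕ) → ρ * x ⟨0,hn⟩ * x i ≤ 2)
    (w : Fin n → ℝ) (hw : w ∈ SPlus n) :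
    ∃ wt ∈ SPlus k, qform ρ (fun j : Fin k => x (Fin.castLE hkn j)) wt ≤ qform ρ x w := by
  obtain ⟨hwn, hwp⟩ := hw
  set z : Fin n := ⟨0,hn⟩ with hz
  have hx0 : 0 < x z := by
    rcases (hnonneg z).lt_or_eq with h | h
    · exact h
    · rw [← h] at hx02; norm_num at hx02
  set headS := ((Finset.univ.filter fun i : Fin n => (i:ℕ) < k).erase z) with hhead
  set tailS := (Finset.univ.filter fun i : Fin n => ¬ (i:ℕ) < k) with htail
  have hmemh : ∀ i ∈ headS, i ≠ z ∧ (i:ℕ) < k := by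
    intro i hi
    rw [hhead, Finset.mem_erase, Finset.mem_filter] at hi
    exact ⟨hi.1, hi.2.2⟩
  have hmemt : ∀ i ∈ tailS, k ≤ (i:ℕ) := by
    intro i hi
    rw [htail, Finset.mem_filter] at hi
    exact le_of_not_gt hi.2
  have hztail : ∀ i ∈ tailS, i ≠ z := by
    intro i hi
    have := hmemt i hi
    intro hiz
    rw [hiz, hz] at this
    simp at this; omega
  set A := ∑ i ∈ tailS, (w i)^2 with hA
  set S2 := ∑ i ∈ tailS, w i with hS2
  set H := ∑ i ∈ headS, w i with hH
  set Hx := ∑ i ∈ headS, x i * w i with hHx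
  set t2 := ∑ i ∈ tailS, x i * w i with ht2
  have hA0 : 0 ≤ A := Finset.sum_nonneg fun i _ => sq_nonneg _
  have hS20 : 0 ≤ S2 := Finset.sum_nonneg fun i _ => hwp i
  have hH0 : 0 ≤ H := Finset.sum_nonneg fun i _ => hwp i
  have hHx0 : 0 ≤ Hx := Finset.sum_nonneg fun i _ => mul_nonneg (hnonneg i) (hwp i)
  have ht20 : 0 ≤ t2 := Finset.sum_nonneg fun i _ => mul_nonneg (hnonneg i) (hwp i)
  set r := Real.sqrt ((w z)^2 + A) with hr
  have hr0 : 0 ≤ r := Real.sqrt_nonneg _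
  have hrsq : r^2 = (w z)^2 + A := Real.sq_sqrt (by positivity)
  have hr1 : w z ≤ r := by
    have h : w z = Real.sqrt ((w z)^2) := (Real.sqrt_sq (hwp z)).symm
    rw [hr]
    nth_rewrite 1 [h]
    exact Real.sqrt_le_sqrt (by nlinarith)
  have hAS2 : A ≤ S2^2 := Finset.sum_sq_le_sq_sum_of_nonneg fun i _ => hwp i
  have hr2 : r ≤ w z + S2 := by
    have h : w z + S2 = Real.sqrt ((w z + S2)^2) := (Real.sqrt_sq (add_nonneg (hwp z) hS20)).symm
    rw [hr, h]
    exact Real.sqrt_le_sqrt (by nlinarith [hwp z])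
  set w' : Fin n → ℝ := fun i => if i = z then r else if (i:ℕ) < k then w i else 0 with hw'
  have hw'z : w' z = r := by simp [hw']
  have hw'head : ∀ i ∈ headS, w' i = w i := by
    intro i hi
    obtain ⟨h1, h2⟩ := hmemh i hi
    simp [hw', h1, h2]
  have hw'tail : ∀ i ∈ tailS, w' i = 0 := by
    intro i hi
    have h1 := hztail i hi
    have h2 := hmemt i hi
    simp [hw', h1, not_lt.mpr h2]
  -- sums for w
  have hsw : ∑ i, w i = w z + H + S2 := sum_split hn hk1 hkn w
  have hsxw : ∑ i, x i * w i = x z * w z + Hx + t2 := sum_split hn hk1 hkn _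
  have hswsq : (1:ℝ) = (w z)^2 + (∑ i ∈ headS, (w i)^2) + A := by
    rw [← hwn]; exact sum_split hn hk1 hkn _
  -- sums for w'
  have hsw' : ∑ i, w' i = r + H := by
    rw [sum_split hn hk1 hkn w', hw'z, Finset.sum_congr rfl hw'head,
      Finset.sum_eq_zero hw'tail, add_zero]
  have hsxw' : ∑ i, x i * w' i = x z * r + Hx := by
    have e1 : ∑ i ∈ headS, x i * w' i = Hx :=
      Finset.sum_congr rfl fun i hi => by rw [hw'head i hi]
    have e2 : ∑ i ∈ tailS, x i * w' i = 0 :=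
      Finset.sum_eq_zero fun i hi => by rw [hw'tail i hi, mul_zero]
    rw [sum_split hn hk1 hkn (fun i => x i * w' i), e1, e2, add_zero, hw'z]
  have hsw'sq : ∑ i, (w' i)^2 = 1 := by
    have e1 : ∑ i ∈ headS, (w' i)^2 = ∑ i ∈ headS, (w i)^2 :=
      Finset.sum_congr rfl fun i hi => by rw [hw'head i hi]
    have e2 : ∑ i ∈ tailS, (w' i)^2 = 0 :=
      Finset.sum_eq_zero fun i hi => by rw [hw'tail i hi]; norm_num
    rw [sum_split hn hk1 hkn (fun i => (w' i)^2), e1, e2, add_zero, hw'z, hrsq]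
    linarith [hswsq]
  have hw'mem : w' ∈ SPlus n := by
    refine ⟨hsw'sq, fun i => ?_⟩
    show (0:ℝ) ≤ if i = z then r else if (i:ℕ) < k then w i else 0
    split_ifs with h1 h2
    · exact hr0
    · exact hwp i
    · exact le_refl 0
  set wt : Fin k → ℝ := fun j => w' (Fin.castLE hkn j) with hwt
  have hpad : w' = fun i : Fin n => if h : (i:ℕ) < k then wt ⟨i,h⟩ else 0 := by
    funext i
    by_cases h : (i:ℕ) < k
    · rw [dif_pos h]
      rfl
    · rw [dif_neg h]
      have h1 : i ≠ z := by
        intro hiz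
        rw [hiz, hz] at h
        simp at h
        omega
      simp [hw', h1, h]
  have hwtmem : wt ∈ SPlus k := by
    constructor
    · have e : ∀ i : Fin n, (if h : (i:ℕ) < k then (wt ⟨i,h⟩)^2 else 0) = (w' i)^2 := by
        intro i
        rw [hpad]
        by_cases h : (i:ℕ) < k <;> simp [h]
      rw [← sum_pad hkn (fun j => (wt j)^2), Finset.sum_congr rfl (fun i _ => e i), hsw'sq]
    · intro j; exact hw'mem.2 _
  refine ⟨wt, hwtmem, ?_⟩
  have hps := (pad_spec hkn ρ x wt hwtmem).2
  rw [← hpad] at hps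
  rw [← hps, qform_eq, qform_eq, hsw', hsxw', hsw, hsxw]
  have hHxH : Hx ≤ x z * H := by
    rw [hHx, hH, Finset.mul_sum]
    exact Finset.sum_le_sum fun i _ => mul_le_mul_of_nonneg_right (hxle i) (hwp i)
  have ht2S2 : ρ * x z * t2 ≤ 2 * S2 := by
    have e1 : ρ * x z * t2 = ∑ i ∈ tailS, ρ * x z * (x i * w i) := by
      rw [ht2, Finset.mul_sum]
    have e2 : 2 * S2 = ∑ i ∈ tailS, 2 * w i := by rw [hS2, Finset.mul_sum]
    rw [e1, e2]
    refine Finset.sum_le_sum fun i hi => ?_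
    have hg := hgood i (hmemt i hi)
    calc ρ * x z * (x i * w i) = (ρ * x z * x i) * w i := by ring
      _ ≤ 2 * w i := mul_le_mul_of_nonneg_right hg (hwp i)
  exact key_ineq ρ (x z) (w z) r H Hx S2 t2 hρ hx0 (hwp z) hH0 hHx0 hS20 ht20 hr1 hr2
    hHxH ht2S2 hx02

set_option maxHeartbeats 1000000 in
theorem stmt_10 {n : ℕ} (hn : 0 < n) (ρ : ℝ) (hρ : 0 < ρ)
    (x : Fin n → ℝ) (hdesc : ∀ i j : Fin n, i ≤ j → x j ≤ x i) (hnonneg : ∀ i, 0 ≤ x i)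
    (k : ℕ)
    (hk : k = (Finset.univ.filter fun i : Fin n => 2 - ρ * x ⟨0, hn⟩ * x i < 0).card)
    (hkn : k ≤ n) :
    -- (i)
    (k = 0 →
      ((fun i : Fin n => if i = ⟨0, hn⟩ then (1 : ℝ) else 0) ∈ SPlus n ∧
       ∀ w ∈ SPlus n,
         qform ρ x (fun i : Fin n => if i = ⟨0, hn⟩ then (1 : ℝ) else 0) ≤ qform ρ x w)) ∧
    -- (ii)
    (1 ≤ k →
      (sInf (qform ρ x '' SPlus n) =
        sInf (qform ρ (fun i : Fin k => x (Fin.castLE hkn i)) '' SPlus k) ∧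
       ∀ wt : Fin k → ℝ, wt ∈ SPlus k →
         (∀ w ∈ SPlus k, qform ρ (fun i : Fin k => x (Fin.castLE hkn i)) wt ≤
            qform ρ (fun i : Fin k => x (Fin.castLE hkn i)) w) →
         ((fun i : Fin n => if h : (i : ℕ) < k then wt ⟨i, h⟩ else 0) ∈ SPlus n ∧
          ∀ w ∈ SPlus n,
            qform ρ x (fun i : Fin n => if h : (i : ℕ) < k then wt ⟨i, h⟩ else 0) ≤
              qform ρ x w))) := by
  set z : Fin n := ⟨0, hn⟩ with hz
  have hzle : ∀ i : Fin n, z ≤ i := fun i => by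
    rw [Fin.le_def]; exact Nat.zero_le _
  have hxle : ∀ i, x i ≤ x z := fun i => hdesc z i (hzle i)
  have hdown : ∀ i j : Fin n, i ≤ j → 2 - ρ * x z * x j < 0 → 2 - ρ * x z * x i < 0 := by
    intro i j hij hj
    have h1 : x j ≤ x i := hdesc i j hij
    have h2 : 0 ≤ ρ * x z := mul_nonneg hρ.le (hnonneg z)
    nlinarith [mul_le_mul_of_nonneg_left h1 h2]
  constructor
  · -- part (i)
    intro hk0
    have hall : ∀ i, ρ * x z * x i ≤ 2 := by
      intro i
      by_contra hc
      push_neg at hc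
      have hmem : i ∈ Finset.univ.filter fun i : Fin n => 2 - ρ * x z * x i < 0 := by
        simp only [Finset.mem_filter, Finset.mem_univ, true_and]
        linarith
      have := Finset.card_pos.mpr ⟨i, hmem⟩
      omega
    refine ⟨e1_mem hn, fun w hw => ?_⟩
    rw [qform_e1 hn, qform_eq]
    have hs0 : 0 ≤ ∑ i, w i := Finset.sum_nonneg fun i _ => hw.2 i
    have hs1 : 1 ≤ (∑ i, w i)^2 := by
      have h := Finset.sum_sq_le_sq_sum_of_nonneg (fun i (_ : i ∈ Finset.univ) => hw.2 i)
      rw [hw.1] at h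
      exact h
    have ht0 : 0 ≤ ∑ i, x i * w i :=
      Finset.sum_nonneg fun i _ => mul_nonneg (hnonneg i) (hw.2 i)
    have htle : ∑ i, x i * w i ≤ x z * ∑ i, w i := by
      rw [Finset.mul_sum]
      exact Finset.sum_le_sum fun i _ => mul_le_mul_of_nonneg_right (hxle i) (hw.2 i)
    have hxz2 : ρ * x z * x z ≤ 2 := hall z
    have hkey := pow_le_pow_left₀ ht0 htle 2
    nlinarith [mul_le_mul_of_nonneg_left hkey hρ.le,
      mul_nonneg (sub_nonneg.mpr hxz2) (sub_nonneg.mpr hs1), hnonneg z]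
  · -- part (ii)
    intro hk1
    have hk1' : 0 < k := hk1
    have hSpos : 0 < (Finset.univ.filter fun i : Fin n => 2 - ρ * x z * x i < 0).card := by
      omega
    obtain ⟨i0, hi0⟩ := Finset.card_pos.mp hSpos
    rw [Finset.mem_filter] at hi0
    have hbadz : 2 - ρ * x z * x z < 0 := hdown z i0 (hzle i0) hi0.2
    have hx02 : 2 < ρ * x z * x z := by linarith
    have hgood : ∀ i : Fin n, k ≤ (i:ℕ) → ρ * x z * x i ≤ 2 := by
      intro i hi
      by_contra hc
      push_neg at hc
      have hsub : Finset.Iic i ⊆ Finset.univ.filter fun j : Fin n => 2 - ρ * x z * x j < 0 := by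
        intro j hj
        rw [Finset.mem_Iic] at hj
        simp only [Finset.mem_filter, Finset.mem_univ, true_and]
        exact hdown j i hj (by linarith)
      have hcard := Finset.card_le_card hsub
      rw [Fin.card_Iic] at hcard
      omega
    have hred := reduce hn hkn hk1' hρ hnonneg hxle hx02 hgood
    have hAbdd : BddBelow (qform ρ x '' SPlus n) := by
      refine ⟨-(ρ/2) * (x z)^2 * (n:ℝ)^2, ?_⟩
      rintro a ⟨w, hw, rfl⟩
      exact q_lower hρ x hnonneg (x z) (hnonneg z) hxle w hw
    have hBA : (qform ρ (fun j : Fin k => x (Fin.castLE hkn j)) '' SPlus k)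
        ⊆ (qform ρ x '' SPlus n) := by
      rintro b ⟨wt, hwt, rfl⟩
      obtain ⟨hmem, heq⟩ := pad_spec hkn ρ x wt hwt
      exact ⟨_, hmem, heq⟩
    have hBbdd : BddBelow (qform ρ (fun j : Fin k => x (Fin.castLE hkn j)) '' SPlus k) :=
      hAbdd.mono hBA
    have hAne : (qform ρ x '' SPlus n).Nonempty :=
      ⟨_, ⟨_, e1_mem hn, rfl⟩⟩
    have hBne : (qform ρ (fun j : Fin k => x (Fin.castLE hkn j)) '' SPlus k).Nonempty :=
      ⟨_, ⟨_, e1_mem hk1', rfl⟩⟩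
    constructor
    · apply le_antisymm
      · exact csInf_le_csInf hAbdd hBne hBA
      · refine le_csInf hAne ?_
        rintro a ⟨w, hw, rfl⟩
        obtain ⟨wt, hwt, hle⟩ := hred w hw
        exact le_trans (csInf_le hBbdd ⟨wt, hwt, rfl⟩) hle
    · intro wt hwt hmin
      obtain ⟨hmem, heq⟩ := pad_spec hkn ρ x wt hwt
      refine ⟨hmem, fun w hw => ?_⟩
      rw [heq]
      obtain ⟨wt2, hwt2, hle⟩ := hred w hw
      exact le_trans (hmin wt2 hwt2) hle
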